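/- Let F(x_1,…,x_m; y_1,…,y_n) = p / ∏_{i,j}(x_i − y_j), where p is a Laurent polynomial symmetric separately in the x variables and in the y variables and vanishing on x_1 = x_2 = y_1 and on x_1 = y_1 = y_2. Then the function obtained from (x_1 − y_1)·F by setting x_1 = y_1 has no pole at y_1 = y_j for j ≥ 2 and no pole at y_1 = x_i for i ≥ 2; i.e., its only possible pole in y_1 is at y_1 = 0. -/

import Mathlib

open MvPolynomial

private lemma aeval_comp_aeval' {σ R A B : Type*} [CommSemiring R]
    [CommSemiring A] [Algebra R A] [CommSemiring B] [Algebra R B]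
    (f : σ → A) (g : A →ₐ[R] B) (p : MvPolynomial σ R) :
    g (aeval f p) = aeval (fun v => g (f v)) p := by
  rw [← MvPolynomial.comp_aeval]; rfl

private lemma prod_X_sub_C_dvd' {R : Type*} [CommRing R] [IsDomain R] {ι : Type*}
    [DecidableEq ι] (s : Finset ι) (c : ι → R) :
    ∀ P : Polynomial R, Set.InjOn c s → (∀ i ∈ s, P.eval (c i) = 0) →
      (∏ i ∈ s, (Polynomial.X - Polynomial.C (c i))) ∣ P := by
  classical
  induction s using Finset.induction_on with
  | empty => intro P _ _; simp
  | @insert a s ha ih =>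
    intro P hinj h
    have h1 : (Polynomial.X - Polynomial.C (c a)) ∣ P :=
      Polynomial.dvd_iff_isRoot.2 (h a (Finset.mem_insert_self a s))
    obtain ⟨Q, rfl⟩ := h1
    rw [Finset.prod_insert ha]
    refine mul_dvd_mul_left _ (ih Q (hinj.mono ?_) ?_)
    · intro x hx
      simp only [Finset.coe_insert, Set.mem_insert_iff]
      exact Or.inr hx
    · intro i hi
      have h0 := h i (Finset.mem_insert_of_mem hi)
      rw [Polynomial.eval_mul, Polynomial.eval_sub, Polynomial.eval_X,
        Polynomial.eval_C] at h0
      have hia : i ≠ a := fun hEq => ha (hEq ▸ hi)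
      have hne : c i - c a ≠ 0 := by
        refine sub_ne_zero.2 fun hEq => hia ?_
        exact hinj (by simp [hi]) (by simp) hEq
      exact (mul_eq_zero.1 h0).resolve_left hne

private lemma vanish_x (m n : ℕ) (hm : 1 ≤ m) (hn : 1 ≤ n)
    (p : MvPolynomial (Fin m ⊕ Fin n) ℚ)
    (hx : ∀ σ : Equiv.Perm (Fin m), rename (Sum.map σ id) p = p)
    (hserre1 : ∀ (hm2 : 2 ≤ m) (hn1 : 1 ≤ n),
      aeval (fun v : Fin m ⊕ Fin n =>
        if v = Sum.inl ⟨1, hm2⟩ ∨ v = Sum.inr ⟨0, hn1⟩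
        then (X (Sum.inl (⟨0, Nat.lt_of_lt_of_le Nat.zero_lt_two hm2⟩ : Fin m)) : MvPolynomial (Fin m ⊕ Fin n) ℚ)
        else X v) p = 0)
    (i : Fin m) (hi : 0 < (i : ℕ)) :
    aeval (fun v : Fin m ⊕ Fin n =>
      if v = Sum.inl (⟨0, hm⟩ : Fin m) ∨ v = Sum.inr (⟨0, hn⟩ : Fin n)
      then (X (Sum.inl i) : MvPolynomial (Fin m ⊕ Fin n) ℚ)
      else X v) p = 0 := by
  classical
  have him := i.isLt
  have hm2 : 2 ≤ m := by omega
  have h0 := hserre1 hm2 hn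
  have h1 : aeval (fun v : Fin m ⊕ Fin n =>
      aeval (fun u : Fin m ⊕ Fin n =>
        if u = Sum.inl (⟨0, hm⟩ : Fin m) then (X (Sum.inl i) : MvPolynomial (Fin m ⊕ Fin n) ℚ)
        else if u = Sum.inl i then X (Sum.inl (⟨1, hm2⟩ : Fin m)) else X u)
      (if v = Sum.inl (⟨1, hm2⟩ : Fin m) ∨ v = Sum.inr (⟨0, hn⟩ : Fin n)
        then (X (Sum.inl (⟨0, hm⟩ : Fin m)) : MvPolynomial (Fin m ⊕ Fin n) ℚ)
        else X v)) p = 0 := by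
    have h2 := congrArg (aeval (fun u : Fin m ⊕ Fin n =>
        if u = Sum.inl (⟨0, hm⟩ : Fin m) then (X (Sum.inl i) : MvPolynomial (Fin m ⊕ Fin n) ℚ)
        else if u = Sum.inl i then X (Sum.inl (⟨1, hm2⟩ : Fin m)) else X u)) h0
    rw [map_zero, aeval_comp_aeval'] at h2
    exact h2
  rw [← hx (Equiv.swap (⟨1, hm2⟩ : Fin m) i), aeval_rename] at h1
  have hfun : ((fun v : Fin m ⊕ Fin n =>
      aeval (fun u : Fin m ⊕ Fin n =>
        if u = Sum.inl (⟨0, hm⟩ : Fin m) then (X (Sum.inl i) : MvPolynomial (Fin m ⊕ Fin n) ℚ)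
        else if u = Sum.inl i then X (Sum.inl (⟨1, hm2⟩ : Fin m)) else X u)
      (if v = Sum.inl (⟨1, hm2⟩ : Fin m) ∨ v = Sum.inr (⟨0, hn⟩ : Fin n)
        then (X (Sum.inl (⟨0, hm⟩ : Fin m)) : MvPolynomial (Fin m ⊕ Fin n) ℚ)
        else X v)) ∘ Sum.map (Equiv.swap (⟨1, hm2⟩ : Fin m) i) id) =
      (fun v : Fin m ⊕ Fin n =>
        if v = Sum.inl (⟨0, hm⟩ : Fin m) ∨ v = Sum.inr (⟨0, hn⟩ : Fin n)
        then (X (Sum.inl i) : MvPolynomial (Fin m ⊕ Fin n) ℚ)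
        else X v) := by
    funext v
    rcases v with b | c <;>
      simp only [Function.comp_apply, Sum.map_inl, Sum.map_inr, id_eq,
        Equiv.swap_apply_def] <;>
      split_ifs <;>
      simp only [aeval_X] <;>
      split_ifs <;>
      first
        | rfl
        | (simp only [MvPolynomial.X_injective.eq_iff, Sum.inl.injEq, Sum.inr.injEq,
            reduceCtorEq, or_false, false_or, not_true, not_false_iff, not_or,
            Fin.ext_iff, Fin.val_zero, Fin.val_one] at * <;> omega)
  rw [hfun] at h1
  exact h1

private lemma vanish_y (m n : ℕ) (hm : 1 ≤ m) (hn : 1 ≤ n)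
    (p : MvPolynomial (Fin m ⊕ Fin n) ℚ)
    (hy : ∀ σ : Equiv.Perm (Fin n), rename (Sum.map id σ) p = p)
    (hserre2 : ∀ (hm1 : 1 ≤ m) (hn2 : 2 ≤ n),
      aeval (fun v : Fin m ⊕ Fin n =>
        if v = Sum.inr (⟨0, Nat.lt_of_lt_of_le Nat.zero_lt_two hn2⟩ : Fin n) ∨ v = Sum.inr ⟨1, hn2⟩
        then (X (Sum.inl (⟨0, hm1⟩ : Fin m)) : MvPolynomial (Fin m ⊕ Fin n) ℚ)
        else X v) p = 0)
    (j : Fin n) (hj : 0 < (j : ℕ)) :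
    aeval (fun v : Fin m ⊕ Fin n =>
      if v = Sum.inl (⟨0, hm⟩ : Fin m) ∨ v = Sum.inr (⟨0, hn⟩ : Fin n)
      then (X (Sum.inr j) : MvPolynomial (Fin m ⊕ Fin n) ℚ)
      else X v) p = 0 := by
  classical
  have hjn := j.isLt
  have hn2 : 2 ≤ n := by omega
  have h0 := hserre2 hm hn2
  have h1 : aeval (fun v : Fin m ⊕ Fin n =>
      aeval (fun u : Fin m ⊕ Fin n =>
        if u = Sum.inl (⟨0, hm⟩ : Fin m) then (X (Sum.inr j) : MvPolynomial (Fin m ⊕ Fin n) ℚ)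
        else if u = Sum.inr j then X (Sum.inr (⟨1, hn2⟩ : Fin n)) else X u)
      (if v = Sum.inr (⟨0, hn⟩ : Fin n) ∨ v = Sum.inr (⟨1, hn2⟩ : Fin n)
        then (X (Sum.inl (⟨0, hm⟩ : Fin m)) : MvPolynomial (Fin m ⊕ Fin n) ℚ)
        else X v)) p = 0 := by
    have h2 := congrArg (aeval (fun u : Fin m ⊕ Fin n =>
        if u = Sum.inl (⟨0, hm⟩ : Fin m) then (X (Sum.inr j) : MvPolynomial (Fin m ⊕ Fin n) ℚ)
        else if u = Sum.inr j then X (Sum.inr (⟨1, hn2⟩ : Fin n)) else X u)) h0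
    rw [map_zero, aeval_comp_aeval'] at h2
    exact h2
  rw [← hy (Equiv.swap (⟨1, hn2⟩ : Fin n) j), aeval_rename] at h1
  have hfun : ((fun v : Fin m ⊕ Fin n =>
      aeval (fun u : Fin m ⊕ Fin n =>
        if u = Sum.inl (⟨0, hm⟩ : Fin m) then (X (Sum.inr j) : MvPolynomial (Fin m ⊕ Fin n) ℚ)
        else if u = Sum.inr j then X (Sum.inr (⟨1, hn2⟩ : Fin n)) else X u)
      (if v = Sum.inr (⟨0, hn⟩ : Fin n) ∨ v = Sum.inr (⟨1, hn2⟩ : Fin n)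
        then (X (Sum.inl (⟨0, hm⟩ : Fin m)) : MvPolynomial (Fin m ⊕ Fin n) ℚ)
        else X v)) ∘ Sum.map id (Equiv.swap (⟨1, hn2⟩ : Fin n) j)) =
      (fun v : Fin m ⊕ Fin n =>
        if v = Sum.inl (⟨0, hm⟩ : Fin m) ∨ v = Sum.inr (⟨0, hn⟩ : Fin n)
        then (X (Sum.inr j) : MvPolynomial (Fin m ⊕ Fin n) ℚ)
        else X v) := by
    funext v
    rcases v with b | c <;>
      simp only [Function.comp_apply, Sum.map_inl, Sum.map_inr, id_eq,
        Equiv.swap_apply_def] <;>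
      split_ifs <;>
      simp only [aeval_X] <;>
      split_ifs <;>
      first
        | rfl
        | (simp only [MvPolynomial.X_injective.eq_iff, Sum.inl.injEq, Sum.inr.injEq,
            reduceCtorEq, or_false, false_or, not_true, not_false_iff, not_or,
            Fin.ext_iff, Fin.val_zero, Fin.val_one] at * <;> omega)
  rw [hfun] at h1
  exact h1

theorem stmt16 (m n : ℕ) (hm : 1 ≤ m) (hn : 1 ≤ n)
    (p : MvPolynomial (Fin m ⊕ Fin n) ℚ)
    (hx : ∀ σ : Equiv.Perm (Fin m), rename (Sum.map σ id) p = p)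
    (hy : ∀ σ : Equiv.Perm (Fin n), rename (Sum.map id σ) p = p)
    (hserre1 : ∀ (hm2 : 2 ≤ m) (hn1 : 1 ≤ n),
      aeval (fun v : Fin m ⊕ Fin n =>
        if v = Sum.inl ⟨1, hm2⟩ ∨ v = Sum.inr ⟨0, hn1⟩
        then (X (Sum.inl (⟨0, by omega⟩ : Fin m)) : MvPolynomial (Fin m ⊕ Fin n) ℚ)
        else X v) p = 0)
    (hserre2 : ∀ (hm1 : 1 ≤ m) (hn2 : 2 ≤ n),
      aeval (fun v : Fin m ⊕ Fin n =>
        if v = Sum.inr (⟨0, by omega⟩ : Fin n) ∨ v = Sum.inr ⟨1, hn2⟩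
        then (X (Sum.inl (⟨0, hm1⟩ : Fin m)) : MvPolynomial (Fin m ⊕ Fin n) ℚ)
        else X v) p = 0) :
    ((∏ j ∈ Finset.univ.filter (fun j : Fin n => 0 < (j : ℕ)),
        ((X (Sum.inr (⟨0, hn⟩ : Fin n)) : MvPolynomial (Fin m ⊕ Fin n) ℚ) - X (Sum.inr j))) *
      (∏ i ∈ Finset.univ.filter (fun i : Fin m => 0 < (i : ℕ)),
        ((X (Sum.inl i) : MvPolynomial (Fin m ⊕ Fin n) ℚ) - X (Sum.inr (⟨0, hn⟩ : Fin n))))) ∣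
      aeval (fun v : Fin m ⊕ Fin n =>
        if v = Sum.inl (⟨0, hm⟩ : Fin m)
        then (X (Sum.inr (⟨0, hn⟩ : Fin n)) : MvPolynomial (Fin m ⊕ Fin n) ℚ)
        else X v) p := by
  classical
  set y1 : Fin m ⊕ Fin n := Sum.inr ⟨0, hn⟩ with hy1def
  set x1 : Fin m ⊕ Fin n := Sum.inl ⟨0, hm⟩ with hx1def
  have hx1y1 : x1 ≠ y1 := by simp [hx1def, hy1def]
  set T : MvPolynomial (Fin m ⊕ Fin n) ℚ →ₐ[ℚ] Polynomial (MvPolynomial (Fin m ⊕ Fin n) ℚ) :=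
    aeval (fun v => if v = y1 then Polynomial.X else Polynomial.C (X v)) with hTdef
  set S : Polynomial (MvPolynomial (Fin m ⊕ Fin n) ℚ) →ₐ[ℚ] MvPolynomial (Fin m ⊕ Fin n) ℚ :=
    (Polynomial.aeval (X y1 : MvPolynomial (Fin m ⊕ Fin n) ℚ)).restrictScalars ℚ with hSdef
  have hST : ∀ q : MvPolynomial (Fin m ⊕ Fin n) ℚ, S (T q) = q := by
    intro q
    rw [hTdef, aeval_comp_aeval']
    have h : (fun v : Fin m ⊕ Fin n =>
        S (if v = y1 then Polynomial.X else Polynomial.C (X v))) = X := by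
      funext v
      by_cases hv : v = y1 <;> simp [hv, hSdef]
    rw [h, aeval_X_left_apply]
  set RHS := aeval (fun v : Fin m ⊕ Fin n =>
      if v = x1 then (X y1 : MvPolynomial (Fin m ⊕ Fin n) ℚ) else X v) p with hRdef
  -- roots of T RHS
  have hroot : ∀ w : Fin m ⊕ Fin n,
      aeval (fun v : Fin m ⊕ Fin n =>
        if v = x1 ∨ v = y1 then (X w : MvPolynomial (Fin m ⊕ Fin n) ℚ) else X v) p = 0 →
      Polynomial.eval (X w : MvPolynomial (Fin m ⊕ Fin n) ℚ) (T RHS) = 0 := by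
    intro w hw
    have hE : Polynomial.eval (X w : MvPolynomial (Fin m ⊕ Fin n) ℚ) (T RHS) =
        ((Polynomial.aeval (X w : MvPolynomial (Fin m ⊕ Fin n) ℚ)).restrictScalars ℚ) (T RHS) := by
      simp [Polynomial.coe_aeval_eq_eval]
    rw [hE, hTdef, hRdef, aeval_comp_aeval', aeval_comp_aeval']
    have hmid : (fun v : Fin m ⊕ Fin n =>
        aeval (fun u : Fin m ⊕ Fin n =>
            ((Polynomial.aeval (X w : MvPolynomial (Fin m ⊕ Fin n) ℚ)).restrictScalars ℚ)
            (if u = y1 then (Polynomial.X : Polynomial (MvPolynomial (Fin m ⊕ Fin n) ℚ))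
            else Polynomial.C (X u)))
            (if v = x1 then (X y1 : MvPolynomial (Fin m ⊕ Fin n) ℚ) else X v)) =
        (fun v : Fin m ⊕ Fin n =>
          if v = x1 ∨ v = y1 then (X w : MvPolynomial (Fin m ⊕ Fin n) ℚ) else X v) := by
      funext v
      by_cases hv1 : v = x1
      · simp [hv1, hx1y1.symm, Polynomial.coe_aeval_eq_eval]
      · by_cases hv2 : v = y1
        · simp [hv1, hv2, Polynomial.coe_aeval_eq_eval]
        · simp [hv1, hv2, Polynomial.coe_aeval_eq_eval]
    rw [hmid]
    exact hw
  -- product of linear factors divides T RHS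
  set xs := Finset.univ.filter (fun i : Fin m => 0 < (i : ℕ)) with hxsdef
  set ys := Finset.univ.filter (fun j : Fin n => 0 < (j : ℕ)) with hysdef
  have hdvd : (∏ v ∈ xs.disjSum ys,
      (Polynomial.X - Polynomial.C (X v : MvPolynomial (Fin m ⊕ Fin n) ℚ))) ∣ T RHS := by
    refine prod_X_sub_C_dvd' (xs.disjSum ys)
      (fun v => (X v : MvPolynomial (Fin m ⊕ Fin n) ℚ)) (T RHS) ?_ ?_
    · exact (MvPolynomial.X_injective).injOn
    · intro v hv
      rw [Finset.mem_disjSum] at hv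
      rcases hv with ⟨a, ha, rfl⟩ | ⟨b, hb, rfl⟩
      · refine hroot _ (vanish_x m n hm hn p hx hserre1 a ?_)
        simpa [hxsdef] using ha
      · refine hroot _ (vanish_y m n hm hn p hy hserre2 b ?_)
        simpa [hysdef] using hb
  rw [Finset.prod_disjSum] at hdvd
  -- compute T of the LHS
  have hTy : T (X y1 : MvPolynomial (Fin m ⊕ Fin n) ℚ) = Polynomial.X := by
    simp [hTdef]
  have hTyj : ∀ j : Fin n, 0 < (j : ℕ) →
      T (X (Sum.inr j) : MvPolynomial (Fin m ⊕ Fin n) ℚ) = Polynomial.C (X (Sum.inr j)) := by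
    intro j hj
    have h : (Sum.inr j : Fin m ⊕ Fin n) ≠ y1 := by
      simp only [hy1def, ne_eq, Sum.inr.injEq, Fin.ext_iff, Fin.val_zero]
      omega
    simp [hTdef, h]
  have hTxi : ∀ i : Fin m,
      T (X (Sum.inl i) : MvPolynomial (Fin m ⊕ Fin n) ℚ) = Polynomial.C (X (Sum.inl i)) := by
    intro i
    have h : (Sum.inl i : Fin m ⊕ Fin n) ≠ y1 := by simp [hy1def]
    simp [hTdef, h]
  have hTL : T ((∏ j ∈ ys, ((X y1 : MvPolynomial (Fin m ⊕ Fin n) ℚ) - X (Sum.inr j))) *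
      (∏ i ∈ xs, ((X (Sum.inl i) : MvPolynomial (Fin m ⊕ Fin n) ℚ) - X y1))) =
      (∏ j ∈ ys, (Polynomial.X -
        Polynomial.C (X (Sum.inr j) : MvPolynomial (Fin m ⊕ Fin n) ℚ))) *
      ((-1 : Polynomial (MvPolynomial (Fin m ⊕ Fin n) ℚ)) ^ xs.card *
        ∏ i ∈ xs, (Polynomial.X -
          Polynomial.C (X (Sum.inl i) : MvPolynomial (Fin m ⊕ Fin n) ℚ))) := by
    rw [map_mul, map_prod, map_prod]
    congr 1
    · refine Finset.prod_congr rfl fun j hj => ?_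
      rw [map_sub, hTy, hTyj j (by simpa [hysdef] using hj)]
    · rw [← Finset.prod_const (-1 : Polynomial (MvPolynomial (Fin m ⊕ Fin n) ℚ)),
        ← Finset.prod_mul_distrib]
      refine Finset.prod_congr rfl fun i _ => ?_
      rw [map_sub, hTy, hTxi i]
      ring
  -- transfer divisibility back
  suffices hTdvd : T ((∏ j ∈ ys, ((X y1 : MvPolynomial (Fin m ⊕ Fin n) ℚ) - X (Sum.inr j))) *
      (∏ i ∈ xs, ((X (Sum.inl i) : MvPolynomial (Fin m ⊕ Fin n) ℚ) - X y1))) ∣ T RHS by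
    obtain ⟨c, hc⟩ := hTdvd
    refine ⟨S c, ?_⟩
    have h2 := congrArg S hc
    rwa [map_mul, hST, hST] at h2
  rw [hTL]
  rcases neg_one_pow_eq_or (Polynomial (MvPolynomial (Fin m ⊕ Fin n) ℚ)) xs.card with h | h <;>
    rw [h]
  · rw [one_mul, mul_comm]
    exact hdvd
  · rw [neg_one_mul, mul_neg, neg_dvd, mul_comm]
    exact hdvd
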